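/- For every n ≥ 2, the number of permutations of [n] avoiding all eight patterns 3214, 3241, 4213, 4231, 3124, 3142, 4123, 4132 is n·2^{n-2}. -/

import Mathlib

def Contains {n k : ℕ} (σ : Equiv.Perm (Fin n)) (τ : Fin k → ℕ) : Prop :=
  ∃ f : Fin k → Fin n, StrictMono f ∧ ∀ a b : Fin k, τ a < τ b ↔ σ (f a) < σ (f b)

/-- Avoidance of all eight patterns in `T₁ ∪ T₂`. -/
def AvoidsT1T2 {n : ℕ} (σ : Equiv.Perm (Fin n)) : Prop :=
  ¬ Contains σ ![2,1,0,3] ∧ ¬ Contains σ ![2,1,3,0] ∧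
  ¬ Contains σ ![3,1,0,2] ∧ ¬ Contains σ ![3,1,2,0] ∧
  ¬ Contains σ ![2,0,1,3] ∧ ¬ Contains σ ![2,0,3,1] ∧
  ¬ Contains σ ![3,0,1,2] ∧ ¬ Contains σ ![3,0,2,1]

open Equiv Fin

variable {m : ℕ}

/-- insert value `a` at position `p`. -/
def ins (p a : Fin (m+1)) (τ : Perm (Fin m)) : Perm (Fin (m+1)) :=
  (finSuccEquiv' p).trans ((Equiv.optionCongr τ).trans (finSuccEquiv' a).symm)

lemma ins_self (p a : Fin (m+1)) (τ : Perm (Fin m)) : ins p a τ p = a := by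
  simp [ins, finSuccEquiv'_at]

lemma ins_succAbove (p a : Fin (m+1)) (τ : Perm (Fin m)) (j : Fin m) :
    ins p a τ (p.succAbove j) = a.succAbove (τ j) := by
  simp [ins, finSuccEquiv'_succAbove, finSuccEquiv'_symm_some]

/-- delete position `p` (and value `σ p`). -/
def rem (p : Fin (m+1)) (σ : Perm (Fin (m+1))) : Perm (Fin m) :=
  Equiv.removeNone ((finSuccEquiv' p).symm.trans (σ.trans (finSuccEquiv' (σ p))))

lemma rem_spec (p : Fin (m+1)) (σ : Perm (Fin (m+1))) (j : Fin m) :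
    σ (p.succAbove j) = (σ p).succAbove (rem p σ j) := by
  set e : Option (Fin m) ≃ Option (Fin m) :=
    (finSuccEquiv' p).symm.trans (σ.trans (finSuccEquiv' (σ p))) with he
  have h1 : e (some j) = some (rem p σ j) := by
    have hne : ∃ x', e (some j) = some x' := by
      rcases h : e (some j) with _ | x'
      · exfalso
        have : e none = none := by simp [he, finSuccEquiv'_symm_none, finSuccEquiv'_at]
        have := e.injective (h.trans this.symm)
        simp at this
      · exact ⟨x', rfl⟩
    exact ((Equiv.removeNone_some e hne)).symm
  have h2 : e (some j) = finSuccEquiv' (σ p) (σ (p.succAbove j)) := by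
    simp [he, finSuccEquiv'_symm_some]
  rw [h2] at h1
  have := congrArg (finSuccEquiv' (σ p)).symm h1
  simpa [finSuccEquiv'_symm_some] using this

lemma ins_rem (p : Fin (m+1)) (σ : Perm (Fin (m+1))) : ins p (σ p) (rem p σ) = σ := by
  apply Equiv.ext
  intro x
  rcases eq_or_ne x p with rfl | hx
  · rw [ins_self]
  · obtain ⟨j, rfl⟩ := Fin.exists_succAbove_eq hx
    rw [ins_succAbove, ← rem_spec]

lemma rem_ins (p a : Fin (m+1)) (τ : Perm (Fin m)) : rem p (ins p a τ) = τ := by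
  apply Equiv.ext
  intro j
  have h := rem_spec p (ins p a τ) j
  rw [ins_succAbove, ins_self] at h
  exact ((a.succAbove_right_injective) h).symm

lemma contains_ins {k : ℕ} (p a : Fin (m+1)) (τ : Perm (Fin m)) (pat : Fin k → ℕ)
    (h : Contains τ pat) : Contains (ins p a τ) pat := by
  obtain ⟨f, hf, hiff⟩ := h
  refine ⟨fun i => p.succAbove (f i), (strictMono_succAbove p).comp hf, fun x y => ?_⟩
  rw [ins_succAbove, ins_succAbove, succAbove_lt_succAbove_iff, hiff]

lemma contains_rem {k : ℕ} (p : Fin (m+1)) (σ : Perm (Fin (m+1))) (pat : Fin k → ℕ)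
    (f : Fin k → Fin (m+1)) (hf : StrictMono f)
    (hiff : ∀ a b : Fin k, pat a < pat b ↔ σ (f a) < σ (f b))
    (hp : ∀ i, f i ≠ p) : Contains (rem p σ) pat := by
  choose g hg using fun i => Fin.exists_succAbove_eq (hp i)
  refine ⟨g, fun x y hxy => ?_, fun x y => ?_⟩
  · have := hf hxy
    rw [← hg x, ← hg y] at this
    exact (succAbove_lt_succAbove_iff).mp this
  · rw [hiff x y, ← hg x, ← hg y, rem_spec p σ, rem_spec p σ,
      succAbove_lt_succAbove_iff]
lemma contains_of_rem {k : ℕ} (p : Fin (m+1)) (σ : Perm (Fin (m+1))) (pat : Fin k → ℕ)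
    (c : Contains (rem p σ) pat) : Contains σ pat := by
  have := contains_ins p (σ p) (rem p σ) pat c
  rwa [ins_rem] at this

lemma avoids_rem (p : Fin (m+1)) (σ : Perm (Fin (m+1))) (h : AvoidsT1T2 σ) :
    AvoidsT1T2 (rem p σ) := by
  obtain ⟨h1,h2,h3,h4,h5,h6,h7,h8⟩ := h
  exact ⟨fun c => h1 (contains_of_rem p σ _ c), fun c => h2 (contains_of_rem p σ _ c),
    fun c => h3 (contains_of_rem p σ _ c), fun c => h4 (contains_of_rem p σ _ c),
    fun c => h5 (contains_of_rem p σ _ c), fun c => h6 (contains_of_rem p σ _ c),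
    fun c => h7 (contains_of_rem p σ _ c), fun c => h8 (contains_of_rem p σ _ c)⟩

lemma contains_ins_zero {v : Fin (m+1)} (hv : (v:ℕ) ≤ 1) (τ : Perm (Fin m)) (pat : Fin 4 → ℕ)
    (i₁ i₂ : Fin 4) (h₁ : pat i₁ < pat 0) (h₂ : pat i₂ < pat 0) (hne : i₁ ≠ i₂) :
    Contains (ins 0 v τ) pat → Contains τ pat := by
  rintro ⟨f, hf, hiff⟩
  by_cases h0 : f 0 = 0
  · exfalso
    have hv0 : ins 0 v τ (f 0) = v := by rw [h0, ins_self]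
    have e1 := (hiff i₁ 0).mp h₁
    have e2 := (hiff i₂ 0).mp h₂
    rw [hv0] at e1 e2
    have e1' : (ins 0 v τ (f i₁) : ℕ) < (v:ℕ) := e1
    have e2' : (ins 0 v τ (f i₂) : ℕ) < (v:ℕ) := e2
    have v1 : (ins 0 v τ (f i₁) : ℕ) = 0 := by omega
    have v2 : (ins 0 v τ (f i₂) : ℕ) = 0 := by omega
    have : f i₁ = f i₂ := (ins 0 v τ).injective (Fin.ext (v1.trans v2.symm))
    exact hne (hf.injective this)
  · have hne0 : ∀ i, f i ≠ 0 := by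
      intro i hi
      have : f 0 ≤ f i := hf.monotone (Fin.zero_le i)
      rw [hi] at this
      exact h0 (le_antisymm this (Fin.zero_le _))
    have := contains_rem 0 (ins 0 v τ) pat f hf hiff hne0
    rwa [rem_ins] at this

lemma avoids_ins01 {v : Fin (m+1)} (hv : (v:ℕ) ≤ 1) (τ : Perm (Fin m)) (h : AvoidsT1T2 τ) :
    AvoidsT1T2 (ins 0 v τ) := by
  obtain ⟨h1,h2,h3,h4,h5,h6,h7,h8⟩ := h
  refine ⟨fun c => h1 (contains_ins_zero hv τ _ 2 1 ?_ ?_ ?_ c),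
    fun c => h2 (contains_ins_zero hv τ _ 3 1 ?_ ?_ ?_ c),
    fun c => h3 (contains_ins_zero hv τ _ 2 1 ?_ ?_ ?_ c),
    fun c => h4 (contains_ins_zero hv τ _ 3 1 ?_ ?_ ?_ c),
    fun c => h5 (contains_ins_zero hv τ _ 1 2 ?_ ?_ ?_ c),
    fun c => h6 (contains_ins_zero hv τ _ 1 3 ?_ ?_ ?_ c),
    fun c => h7 (contains_ins_zero hv τ _ 1 2 ?_ ?_ ?_ c),
    fun c => h8 (contains_ins_zero hv τ _ 1 3 ?_ ?_ ?_ c)⟩ <;> decide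

def pieceEquiv {n : ℕ} (v : Fin (n+1)) (hv : (v:ℕ) ≤ 1) :
    {σ : Perm (Fin (n+1)) // AvoidsT1T2 σ ∧ σ 0 = v} ≃ {τ : Perm (Fin n) // AvoidsT1T2 τ} where
  toFun σ := ⟨rem 0 σ.1, avoids_rem _ _ σ.2.1⟩
  invFun τ := ⟨ins 0 v τ.1, ⟨avoids_ins01 hv _ τ.2, ins_self _ _ _⟩⟩
  left_inv := by
    rintro ⟨σ, hσ, h0⟩
    apply Subtype.ext
    simp only
    rw [← h0, ins_rem]
  right_inv := by
    rintro ⟨τ, hτ⟩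
    apply Subtype.ext
    simp only
    rw [rem_ins]
def Uni {M : ℕ} (σ : Perm (Fin M)) : Prop :=
  (∀ i : Fin M, M ≤ (i:ℕ) + 2 → (σ i : ℕ) < 2) ∧
  (∀ i j k : Fin M, i < j → j < k → (k:ℕ) + 3 ≤ M →
    (σ j : ℕ) < (σ i : ℕ) → (σ j : ℕ) < (σ k : ℕ) → False)

lemma uni_block {M : ℕ} {σ : Perm (Fin M)}
    (h2 : ∀ i : Fin M, M ≤ (i:ℕ) + 2 → (σ i : ℕ) < 2)
    (j : Fin M) (hj : (j:ℕ) + 3 ≤ M) : 2 ≤ (σ j : ℕ) := by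
  have hm : 3 ≤ M := by omega
  set p1 : Fin M := ⟨M-1, by omega⟩ with hp1
  set p2 : Fin M := ⟨M-2, by omega⟩ with hp2
  have hv1 : (σ p1 : ℕ) < 2 := h2 _ (by simp [hp1]; omega)
  have hv2 : (σ p2 : ℕ) < 2 := h2 _ (by simp [hp2]; omega)
  have d12 : (σ p1 : ℕ) ≠ (σ p2 : ℕ) := by
    intro h
    have := σ.injective (Fin.ext h)
    rw [hp1, hp2] at this
    have := congrArg Fin.val this
    simp at this
    omega
  by_contra hcon
  have dj1 : (σ j : ℕ) ≠ (σ p1 : ℕ) := by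
    intro h
    have := σ.injective (Fin.ext h)
    rw [hp1] at this
    have := congrArg Fin.val this
    simp at this
    omega
  have dj2 : (σ j : ℕ) ≠ (σ p2 : ℕ) := by
    intro h
    have := σ.injective (Fin.ext h)
    rw [hp2] at this
    have := congrArg Fin.val this
    simp at this
    omega
  omega

lemma strictMono_four {M : ℕ} {f : Fin 4 → Fin M}
    (h01 : f 0 < f 1) (h12 : f 1 < f 2) (h23 : f 2 < f 3) : StrictMono f := by
  intro a b hab
  fin_cases a <;> fin_cases b <;>
    first
      | exact absurd hab (by decide)
      | exact h01
      | exact h12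
      | exact h23
      | exact h01.trans h12
      | exact h12.trans h23
      | exact (h01.trans h12).trans h23

lemma contains_of_four {M : ℕ} (σ : Perm (Fin M)) (pat : Fin 4 → ℕ) (p0 p1 p2 p3 : Fin M)
    (h01 : p0 < p1) (h12 : p1 < p2) (h23 : p2 < p3)
    (hiff : ∀ a b : Fin 4, pat a < pat b ↔
      (σ (![p0,p1,p2,p3] a) : ℕ) < (σ (![p0,p1,p2,p3] b) : ℕ)) :
    Contains σ pat := by
  refine ⟨![p0,p1,p2,p3], strictMono_four h01 h12 h23, fun a b => ?_⟩
  rw [hiff a b, Fin.lt_def]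

lemma uni_not_contains {M : ℕ} {σ : Perm (Fin M)} (h : Uni σ) (pat : Fin 4 → ℕ)
    (h01 : pat 1 < pat 0) (t : Fin 4) (ht : (1:Fin 4) < t) (hpt : pat 1 < pat t) :
    ¬ Contains σ pat := by
  rintro ⟨f, hf, hiff⟩
  have hf01 : f 0 < f 1 := hf (by decide)
  have hσ01 : (σ (f 1) : ℕ) < (σ (f 0) : ℕ) := (hiff 1 0).mp h01
  have hσ1t : (σ (f 1) : ℕ) < (σ (f t) : ℕ) := (hiff 1 t).mp hpt
  have hf1t : f 1 < f t := hf ht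
  have hb1 : (f 1 : ℕ) + 3 ≤ M := by
    have h12 : f 1 < f 2 := hf (by decide)
    have h23 : f 2 < f 3 := hf (by decide)
    have h3 := (f 3).isLt
    rw [Fin.lt_def] at h12 h23
    omega
  have hv1 : 2 ≤ (σ (f 1) : ℕ) := uni_block h.1 _ hb1
  by_cases hc : (f t : ℕ) + 3 ≤ M
  · exact h.2 (f 0) (f 1) (f t) hf01 hf1t hc hσ01 hσ1t
  · have : (σ (f t) : ℕ) < 2 := h.1 _ (by omega)
    omega

lemma uni_avoids {M : ℕ} {σ : Perm (Fin M)} (h : Uni σ) : AvoidsT1T2 σ := by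
  refine ⟨uni_not_contains h _ ?_ 3 ?_ ?_, uni_not_contains h _ ?_ 2 ?_ ?_,
    uni_not_contains h _ ?_ 3 ?_ ?_, uni_not_contains h _ ?_ 2 ?_ ?_,
    uni_not_contains h _ ?_ 2 ?_ ?_, uni_not_contains h _ ?_ 2 ?_ ?_,
    uni_not_contains h _ ?_ 2 ?_ ?_, uni_not_contains h _ ?_ 2 ?_ ?_⟩ <;> decide

lemma uni_first {m : ℕ} {σ : Perm (Fin (m+3))} (h : Uni σ) : 2 ≤ (σ 0 : ℕ) :=
  uni_block h.1 0 (by simp)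
lemma fin_ne_of_val_ne' {M : ℕ} {σ : Perm (Fin M)} {a b : Fin M}
    (h : (a : ℕ) ≠ (b : ℕ)) : (σ a : ℕ) ≠ (σ b : ℕ) :=
  fun hh => h (congrArg Fin.val (σ.injective (Fin.ext hh)))

set_option maxHeartbeats 3000000 in
lemma avoids_uni {m : ℕ} {σ : Perm (Fin (m+3))} (h : AvoidsT1T2 σ) (h0 : 2 ≤ (σ 0 : ℕ)) :
    Uni σ := by
  obtain ⟨A1, A2, A3, A4, A5, A6, A7, A8⟩ := h
  set pm2 : Fin (m+3) := ⟨m+1, by omega⟩ with hpm2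
  set pm1 : Fin (m+3) := ⟨m+2, by omega⟩ with hpm1
  set z : Fin (m+3) := σ.symm ⟨0, by omega⟩ with hz
  set o : Fin (m+3) := σ.symm ⟨1, by omega⟩ with ho
  have hσz : (σ z : ℕ) = 0 := by rw [hz]; simp
  have hσo : (σ o : ℕ) = 1 := by rw [ho]; simp
  have hzo : z ≠ o := by
    intro hh; have := congrArg (fun x => (σ x : ℕ)) hh; simp [hσz, hσo] at this
  have hz0 : z ≠ 0 := by
    intro hh; rw [hh] at hσz; omega
  have ho0 : o ≠ 0 := by
    intro hh; rw [hh] at hσo; omega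
  -- Step A : value 0 is in one of the last two positions
  have stepA : m+3 ≤ (z : ℕ) + 2 := by
    by_contra hA
    push_neg at hA
    have hzlt : (z : ℕ) + 3 ≤ m+3 := by omega
    rcases lt_trichotomy o z with hoz | hoz | hoz
    · -- occurrence (0, o, z, pm2)
      have h1 : (0 : Fin (m+3)) < o := Fin.pos_of_ne_zero ho0
      have h3 : z < pm2 := by rw [Fin.lt_def]; simp [hpm2] <;> omega
      have hd0 : (σ pm2 : ℕ) ≠ 0 := by
        rw [← hσz]; exact fin_ne_of_val_ne' (by simp [hpm2] <;> omega)
      have hd1 : (σ pm2 : ℕ) ≠ 1 := by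
        rw [← hσo]
        refine fin_ne_of_val_ne' ?_
        have : (o:ℕ) < (z:ℕ) := hoz
        simp [hpm2] <;> omega
      have hda : (σ pm2 : ℕ) ≠ (σ 0 : ℕ) := by
        refine fin_ne_of_val_ne' ?_
        simp [hpm2] <;> omega
      rcases lt_or_gt_of_ne hda with hlt | hgt
      · exact A3 (contains_of_four σ _ 0 o z pm2 h1 hoz h3 (by
          intro a b; fin_cases a <;> fin_cases b <;>
            simp [hσz, hσo] <;> simp only [Fin.lt_def, Fin.le_def, Fin.ext_iff, Fin.val_zero] at * <;> omega))
      · exact A1 (contains_of_four σ _ 0 o z pm2 h1 hoz h3 (by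
          intro a b; fin_cases a <;> fin_cases b <;>
            simp [hσz, hσo] <;> simp only [Fin.lt_def, Fin.le_def, Fin.ext_iff, Fin.val_zero] at * <;> omega))
    · exact absurd hoz hzo.symm
    · -- 0 before 1 : z < o
      have h1 : (0 : Fin (m+3)) < z := Fin.pos_of_ne_zero hz0
      by_cases hq : (o : ℕ) < m+2
      · -- occurrence (0, z, o, pm1)
        have h3 : o < pm1 := by rw [Fin.lt_def]; simp [hpm1] <;> omega
        have hw0 : (σ pm1 : ℕ) ≠ 0 := by
          rw [← hσz]
          refine fin_ne_of_val_ne' ?_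
          simp [hpm1] <;> omega
        have hw1 : (σ pm1 : ℕ) ≠ 1 := by
          rw [← hσo]
          refine fin_ne_of_val_ne' ?_
          simp [hpm1] <;> omega
        have hwa : (σ pm1 : ℕ) ≠ (σ 0 : ℕ) := by
          refine fin_ne_of_val_ne' ?_
          simp [hpm1]
        rcases lt_or_gt_of_ne hwa with hlt | hgt
        · exact A7 (contains_of_four σ _ 0 z o pm1 h1 hoz h3 (by
            intro a b; fin_cases a <;> fin_cases b <;>
              simp [hσz, hσo] <;> simp only [Fin.lt_def, Fin.le_def, Fin.ext_iff, Fin.val_zero] at * <;> omega))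
        · exact A5 (contains_of_four σ _ 0 z o pm1 h1 hoz h3 (by
            intro a b; fin_cases a <;> fin_cases b <;>
              simp [hσz, hσo] <;> simp only [Fin.lt_def, Fin.le_def, Fin.ext_iff, Fin.val_zero] at * <;> omega))
      · -- o = m+2, occurrence (0, z, pm2, o)
        have hoM : (o : ℕ) = m+2 := by have := o.isLt; omega
        have h2 : z < pm2 := by rw [Fin.lt_def]; simp [hpm2] <;> omega
        have h3 : pm2 < o := by rw [Fin.lt_def]; simp [hpm2] <;> omega
        have hx0 : (σ pm2 : ℕ) ≠ 0 := by
          rw [← hσz]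
          refine fin_ne_of_val_ne' ?_
          simp [hpm2] <;> omega
        have hx1 : (σ pm2 : ℕ) ≠ 1 := by
          rw [← hσo]
          refine fin_ne_of_val_ne' ?_
          simp [hpm2] <;> omega
        have hxa : (σ pm2 : ℕ) ≠ (σ 0 : ℕ) := by
          refine fin_ne_of_val_ne' ?_
          simp [hpm2]
        rcases lt_or_gt_of_ne hxa with hlt | hgt
        · exact A8 (contains_of_four σ _ 0 z pm2 o h1 h2 h3 (by
            intro a b; fin_cases a <;> fin_cases b <;>
              simp [hσz, hσo] <;> simp only [Fin.lt_def, Fin.le_def, Fin.ext_iff, Fin.val_zero] at * <;> omega))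
        · exact A6 (contains_of_four σ _ 0 z pm2 o h1 h2 h3 (by
            intro a b; fin_cases a <;> fin_cases b <;>
              simp [hσz, hσo] <;> simp only [Fin.lt_def, Fin.le_def, Fin.ext_iff, Fin.val_zero] at * <;> omega))
  -- Step B : value 1 is in one of the last two positions
  have stepB : m+3 ≤ (o : ℕ) + 2 := by
    by_contra hB
    push_neg at hB
    have h1 : (0 : Fin (m+3)) < o := Fin.pos_of_ne_zero ho0
    have h2 : o < pm2 := by rw [Fin.lt_def]; simp [hpm2] <;> omega
    have h3 : pm2 < pm1 := by rw [Fin.lt_def]; simp [hpm2, hpm1] <;> omega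
    -- z is pm2 or pm1
    have hzcase : z = pm2 ∨ z = pm1 := by
      have := z.isLt
      rcases Nat.lt_or_ge (z:ℕ) (m+2) with hlt | hge
      · left; rw [Fin.ext_iff]; simp [hpm2] <;> omega
      · right; rw [Fin.ext_iff]; simp [hpm1] <;> omega
    rcases hzcase with hc | hc
    · -- σ pm2 = 0, x := σ pm1
      have hc2 : (σ pm2 : ℕ) = 0 := by rw [← hc, hσz]
      have hx0 : (σ pm1 : ℕ) ≠ 0 := by
        rw [← hc2]; exact fin_ne_of_val_ne' (by simp [hpm1, hpm2] <;> omega)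
      have hx1 : (σ pm1 : ℕ) ≠ 1 := by
        rw [← hσo]
        refine fin_ne_of_val_ne' ?_
        simp [hpm1] <;> omega
      have hxa : (σ pm1 : ℕ) ≠ (σ 0 : ℕ) := by
        refine fin_ne_of_val_ne' ?_
        simp [hpm1] <;> omega
      rcases lt_or_gt_of_ne hxa with hlt | hgt
      · exact A3 (contains_of_four σ _ 0 o pm2 pm1 h1 h2 h3 (by
          intro a b; fin_cases a <;> fin_cases b <;>
            simp [hσo, hc2] <;> simp only [Fin.lt_def, Fin.le_def, Fin.ext_iff, Fin.val_zero] at * <;> omega))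
      · exact A1 (contains_of_four σ _ 0 o pm2 pm1 h1 h2 h3 (by
          intro a b; fin_cases a <;> fin_cases b <;>
            simp [hσo, hc2] <;> simp only [Fin.lt_def, Fin.le_def, Fin.ext_iff, Fin.val_zero] at * <;> omega))
    · -- σ pm1 = 0, x := σ pm2
      have hc1 : (σ pm1 : ℕ) = 0 := by rw [← hc, hσz]
      have hx0 : (σ pm2 : ℕ) ≠ 0 := by
        rw [← hc1]; exact fin_ne_of_val_ne' (by simp [hpm1, hpm2] <;> omega)
      have hx1 : (σ pm2 : ℕ) ≠ 1 := by
        rw [← hσo]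
        refine fin_ne_of_val_ne' ?_
        simp [hpm2] <;> omega
      have hxa : (σ pm2 : ℕ) ≠ (σ 0 : ℕ) := by
        refine fin_ne_of_val_ne' ?_
        simp [hpm2] <;> omega
      rcases lt_or_gt_of_ne hxa with hlt | hgt
      · exact A4 (contains_of_four σ _ 0 o pm2 pm1 h1 h2 h3 (by
          intro a b; fin_cases a <;> fin_cases b <;>
            simp [hσo, hc1] <;> simp only [Fin.lt_def, Fin.le_def, Fin.ext_iff, Fin.val_zero] at * <;> omega))
      · exact A2 (contains_of_four σ _ 0 o pm2 pm1 h1 h2 h3 (by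
          intro a b; fin_cases a <;> fin_cases b <;>
            simp [hσo, hc1] <;> simp only [Fin.lt_def, Fin.le_def, Fin.ext_iff, Fin.val_zero] at * <;> omega))
  -- last two positions have the two smallest values
  have lastTwo : ∀ i : Fin (m+3), m+3 ≤ (i:ℕ) + 2 → (σ i : ℕ) < 2 := by
    intro i hi
    by_contra hcon
    push_neg at hcon
    have hiz : i ≠ z := by
      intro hh; rw [hh, hσz] at hcon; omega
    have hio : i ≠ o := by
      intro hh; rw [hh, hσo] at hcon; omega
    have h1 : (i:ℕ) ≠ (z:ℕ) := fun hh => hiz (Fin.ext hh)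
    have h2 : (i:ℕ) ≠ (o:ℕ) := fun hh => hio (Fin.ext hh)
    have h3 : (z:ℕ) ≠ (o:ℕ) := fun hh => hzo (Fin.ext hh)
    have := i.isLt
    have := z.isLt
    have := o.isLt
    omega
  refine ⟨lastTwo, ?_⟩
  -- valley-freeness
  intro i j k hij hjk hk hji hjk2
  have hjb : (j : ℕ) + 3 ≤ m+3 := by
    rw [Fin.lt_def] at hjk; omega
  have hσj : 2 ≤ (σ j : ℕ) := uni_block lastTwo j hjb
  have hkz : k < z := by
    rw [Fin.lt_def]; omega
  have hzσ : (σ z : ℕ) = 0 := hσz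
  have hik : (σ i : ℕ) ≠ (σ k : ℕ) := by
    refine fin_ne_of_val_ne' ?_
    have := hij.trans hjk
    rw [Fin.lt_def] at this
    omega
  rcases lt_or_gt_of_ne hik with hlt | hgt
  · exact A2 (contains_of_four σ _ i j k z hij hjk hkz (by
      intro a b; fin_cases a <;> fin_cases b <;>
        simp [hσz] <;> simp only [Fin.lt_def, Fin.le_def, Fin.ext_iff, Fin.val_zero] at * <;> omega))
  · exact A4 (contains_of_four σ _ i j k z hij hjk hkz (by
      intro a b; fin_cases a <;> fin_cases b <;>
        simp [hσz] <;> simp only [Fin.lt_def, Fin.le_def, Fin.ext_iff, Fin.val_zero] at * <;> omega))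
lemma succAbove_val {M : ℕ} (a : Fin (M+1)) (v : Fin M) :
    ((a.succAbove v) : ℕ) = if (v:ℕ) < (a:ℕ) then (v:ℕ) else (v:ℕ)+1 := by
  rcases Nat.lt_or_ge (v:ℕ) (a:ℕ) with h | h
  · rw [Fin.succAbove_of_castSucc_lt _ _ (by rw [Fin.lt_def]; simpa)]
    simp [h]
  · rw [Fin.succAbove_of_le_castSucc _ _ (by rw [Fin.le_def]; simpa)]
    simp [Nat.not_lt.mpr h]

lemma succAbove_val_lt_iff {M : ℕ} (a : Fin (M+1)) (u v : Fin M) :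
    ((a.succAbove u) : ℕ) < ((a.succAbove v) : ℕ) ↔ (u:ℕ) < (v:ℕ) := by
  rw [← Fin.lt_def, ← Fin.lt_def, succAbove_lt_succAbove_iff]

lemma uni_ins2 {m : ℕ} {τ : Perm (Fin (m+3))} (h : Uni τ) (p : Fin (m+4))
    (hp : (p:ℕ) = 0 ∨ (p:ℕ) = m+1) :
    Uni (ins p ⟨2, by omega⟩ τ) := by
  have hpv : (p:ℕ) ≤ m+1 := by omega
  constructor
  · intro i hi
    have hip : i ≠ p := by
      intro hh
      rw [hh] at hi
      omega
    obtain ⟨j, hj⟩ := Fin.exists_succAbove_eq hip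
    have hjval : (p.succAbove j : ℕ) = if (j:ℕ) < (p:ℕ) then (j:ℕ) else (j:ℕ)+1 :=
      succAbove_val p j
    rw [hj] at hjval
    have hjge : m+3 ≤ (j:ℕ) + 2 := by
      by_cases hc : (j:ℕ) < (p:ℕ) <;> simp [hc] at hjval <;> omega
    have hτj : (τ j : ℕ) < 2 := h.1 j hjge
    rw [← hj, ins_succAbove, succAbove_val]
    simp only [show ((⟨2, by omega⟩ : Fin (m+4)) : ℕ) = 2 from rfl]
    split <;> omega
  · intro i j k hij hjk hk hji hjk2
    rw [Fin.lt_def] at hij hjk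
    have transfer : ∀ x' y' : Fin (m+3),
        ((ins p ⟨2, by omega⟩ τ) (p.succAbove x') : ℕ) <
          ((ins p ⟨2, by omega⟩ τ) (p.succAbove y') : ℕ) ↔ (τ x' : ℕ) < (τ y' : ℕ) := by
      intro x' y'
      rw [ins_succAbove, ins_succAbove, succAbove_val_lt_iff]
    rcases hp with hp0 | hpb
    · -- inserted at the front
      rcases eq_or_ne i p with hip | hip
      · -- value at p is 2, but value at j is ≥ 3
        have hjp : j ≠ p := by
          intro hh
          rw [Fin.ext_iff] at hh hip
          omega
        obtain ⟨j', hj'⟩ := Fin.exists_succAbove_eq hjp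
        have hb : (j':ℕ) + 3 ≤ m+3 := by
          have := succAbove_val p j'
          rw [hj'] at this
          split at this <;> omega
        have h2j : 2 ≤ (τ j' : ℕ) := uni_block h.1 j' hb
        rw [hip, ins_self] at hji
        rw [← hj', ins_succAbove, succAbove_val] at hji
        simp only [show ((⟨2, by omega⟩ : Fin (m+4)) : ℕ) = 2 from rfl] at hji
        split at hji <;> omega
      · have hjp : j ≠ p := by
          intro hh
          rw [Fin.ext_iff] at hh
          omega
        have hkp : k ≠ p := by
          intro hh
          rw [Fin.ext_iff] at hh
          omega
        obtain ⟨i', hi'⟩ := Fin.exists_succAbove_eq hip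
        obtain ⟨j', hj'⟩ := Fin.exists_succAbove_eq hjp
        obtain ⟨k', hk'⟩ := Fin.exists_succAbove_eq hkp
        have vi := succAbove_val p i'
        have vj := succAbove_val p j'
        have vk := succAbove_val p k'
        rw [hi'] at vi; rw [hj'] at vj; rw [hk'] at vk
        rw [← hj', ← hi', transfer] at hji
        rw [← hj', ← hk', transfer] at hjk2
        refine h.2 i' j' k' ?_ ?_ ?_ hji hjk2
        · rw [Fin.lt_def]; split at vi <;> split at vj <;> omega
        · rw [Fin.lt_def]; split at vj <;> split at vk <;> omega
        · split at vk <;> omega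
    · -- inserted at the end of the block, position m+1
      rcases eq_or_ne k p with hkp | hkp
      · have hjp : j ≠ p := by
          intro hh
          rw [Fin.ext_iff] at hh hkp
          omega
        obtain ⟨j', hj'⟩ := Fin.exists_succAbove_eq hjp
        have hb : (j':ℕ) + 3 ≤ m+3 := by
          have := succAbove_val p j'
          rw [hj'] at this
          split at this <;> omega
        have h2j : 2 ≤ (τ j' : ℕ) := uni_block h.1 j' hb
        rw [hkp, ins_self] at hjk2
        rw [← hj', ins_succAbove, succAbove_val] at hjk2
        simp only [show ((⟨2, by omega⟩ : Fin (m+4)) : ℕ) = 2 from rfl] at hjk2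
        split at hjk2 <;> omega
      · have hkv : (k:ℕ) < (p:ℕ) := by
          rcases Nat.lt_or_ge (k:ℕ) (p:ℕ) with hc | hc
          · exact hc
          · exfalso
            apply hkp
            rw [Fin.ext_iff]
            omega
        have hjp : j ≠ p := by
          intro hh; rw [Fin.ext_iff] at hh; omega
        have hip : i ≠ p := by
          intro hh; rw [Fin.ext_iff] at hh; omega
        obtain ⟨i', hi'⟩ := Fin.exists_succAbove_eq hip
        obtain ⟨j', hj'⟩ := Fin.exists_succAbove_eq hjp
        obtain ⟨k', hk'⟩ := Fin.exists_succAbove_eq hkp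
        have vi := succAbove_val p i'
        have vj := succAbove_val p j'
        have vk := succAbove_val p k'
        rw [hi'] at vi; rw [hj'] at vj; rw [hk'] at vk
        rw [← hj', ← hi', transfer] at hji
        rw [← hj', ← hk', transfer] at hjk2
        refine h.2 i' j' k' ?_ ?_ ?_ hji hjk2
        · rw [Fin.lt_def]; split at vi <;> split at vj <;> omega
        · rw [Fin.lt_def]; split at vj <;> split at vk <;> omega
        · split at vk <;> omega

lemma uni_rem2 {m : ℕ} {σ : Perm (Fin (m+4))} (h : Uni σ) :
    ((σ.symm ⟨2, by omega⟩ : Fin (m+4)) : ℕ) = 0 ∨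
      ((σ.symm ⟨2, by omega⟩ : Fin (m+4)) : ℕ) = m+1 := by
  set p : Fin (m+4) := σ.symm ⟨2, by omega⟩ with hp
  have hσp : (σ p : ℕ) = 2 := by rw [hp]; simp
  have hpb : (p:ℕ) + 3 ≤ m + 4 := by
    by_contra hc
    have := h.1 p (by omega)
    omega
  by_contra hc
  push_neg at hc
  obtain ⟨hc0, hcb⟩ := hc
  -- 0 < p < m+1 : valley at (p-1, p, p+1)
  have h1 : (⟨(p:ℕ)-1, by omega⟩ : Fin (m+4)) < p := by rw [Fin.lt_def]; simp <;> simp only [Fin.lt_def, Fin.val_zero] <;> omega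
  have h2 : p < (⟨(p:ℕ)+1, by omega⟩ : Fin (m+4)) := by rw [Fin.lt_def]; simp
  have hbk : ((⟨(p:ℕ)+1, by omega⟩ : Fin (m+4)) : ℕ) + 3 ≤ m+4 := by simp; omega
  have hv1 : 2 ≤ (σ ⟨(p:ℕ)-1, by omega⟩ : ℕ) := uni_block h.1 _ (by simp <;> omega)
  have hv2 : 2 ≤ (σ ⟨(p:ℕ)+1, by omega⟩ : ℕ) := uni_block h.1 _ (by simp <;> omega)
  have hne1 : (σ ⟨(p:ℕ)-1, by omega⟩ : ℕ) ≠ (σ p : ℕ) :=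
    fin_ne_of_val_ne' (by simp <;> omega)
  have hne2 : (σ ⟨(p:ℕ)+1, by omega⟩ : ℕ) ≠ (σ p : ℕ) :=
    fin_ne_of_val_ne' (by simp <;> omega)
  exact h.2 _ _ _ h1 h2 hbk (by omega) (by omega)

lemma uni_rem2' {m : ℕ} {σ : Perm (Fin (m+4))} (h : Uni σ) (p : Fin (m+4))
    (hpb : (p:ℕ) ≤ m+1) : Uni (rem p σ) := by
  constructor
  · intro j hj
    have hjp : (p:ℕ) ≤ (j:ℕ) + 1 := by omega
    have hval : ((p.succAbove j) : ℕ) = if (j:ℕ) < (p:ℕ) then (j:ℕ) else (j:ℕ)+1 :=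
      succAbove_val p j
    have hpos : m + 4 ≤ ((p.succAbove j) : ℕ) + 2 := by
      split at hval <;> omega
    have := h.1 _ hpos
    rw [rem_spec p σ j, succAbove_val] at this
    split at this <;> omega
  · intro i j k hij hjk hk hji hjk2
    have hs : ∀ x : Fin (m+3), (σ (p.succAbove x) : ℕ) =
        ((σ p).succAbove (rem p σ x) : ℕ) := fun x => by rw [rem_spec]
    refine h.2 (p.succAbove i) (p.succAbove j) (p.succAbove k)
      (strictMono_succAbove p hij) (strictMono_succAbove p hjk) ?_ ?_ ?_
    · have := succAbove_val p k
      split at this <;> omega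
    · rw [hs, hs, succAbove_val_lt_iff]
      exact hji
    · rw [hs, hs, succAbove_val_lt_iff]
      exact hjk2
instance uniDec {M : ℕ} : DecidablePred (Uni (M := M)) := fun σ => by
  unfold Uni; infer_instance

lemma ins_rem_val {M : ℕ} (σ : Perm (Fin (M+1))) (p a : Fin (M+1)) (ha : σ p = a) :
    ins p a (rem p σ) = σ := by
  rw [← ha]; exact ins_rem p σ

def uniEquiv (m : ℕ) :
    {σ : Perm (Fin (m+4)) // Uni σ} ≃ Bool × {τ : Perm (Fin (m+3)) // Uni τ} where
  toFun σ := ⟨decide (σ.1.symm ⟨2, by omega⟩ = 0),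
    ⟨rem (σ.1.symm ⟨2, by omega⟩) σ.1, uni_rem2' σ.2 _ (by
      rcases uni_rem2 σ.2 with h | h <;> omega)⟩⟩
  invFun bτ := ⟨ins (if bτ.1 then 0 else ⟨m+1, by omega⟩) ⟨2, by omega⟩ bτ.2.1,
    uni_ins2 bτ.2.2 _ (by cases bτ.1 <;> simp)⟩
  left_inv := by
    rintro ⟨σ, hσ⟩
    apply Subtype.ext
    simp only
    have hval : σ (σ.symm ⟨2, by omega⟩) = ⟨2, by omega⟩ := σ.apply_symm_apply _
    rcases uni_rem2 hσ with h | h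
    · have hp0 : σ.symm ⟨2, by omega⟩ = 0 := Fin.ext (by simpa using h)
      rw [hp0] at hval
      rw [if_pos (show (decide (σ.symm ⟨2, by omega⟩ = (0 : Fin (m+4)))) = true by
        simp [hp0])]
      rw [hp0]
      exact ins_rem_val σ 0 _ hval
    · have hp0 : σ.symm ⟨2, by omega⟩ = ⟨m+1, by omega⟩ := Fin.ext (by simpa using h)
      rw [hp0] at hval
      rw [if_neg (show ¬ ((decide (σ.symm ⟨2, by omega⟩ = (0 : Fin (m+4)))) = true) by
        simp [hp0, Fin.ext_iff])]
      rw [hp0]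
      exact ins_rem_val σ _ _ hval
  right_inv := by
    rintro ⟨b, τ, hτ⟩
    have hq : (ins (if b then (0 : Fin (m+4)) else ⟨m+1, by omega⟩) ⟨2, by omega⟩ τ).symm
        ⟨2, by omega⟩ = (if b then (0 : Fin (m+4)) else ⟨m+1, by omega⟩) := by
      rw [Equiv.symm_apply_eq, ins_self]
    refine Prod.ext ?_ ?_
    · simp only
      rw [hq]
      cases b
      · rw [decide_eq_false] <;> simp [Fin.ext_iff]
      · simp
    · apply Subtype.ext
      simp only
      rw [hq, rem_ins]

lemma uni_card : ∀ m : ℕ, Nat.card {σ : Perm (Fin (m+3)) // Uni σ} = 2^(m+1) := by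
  intro m
  induction m with
  | zero =>
    rw [Nat.card_eq_fintype_card]
    decide
  | succ k ih =>
    have : Nat.card {σ : Perm (Fin (k+4)) // Uni σ} =
        Nat.card (Bool × {τ : Perm (Fin (k+3)) // Uni τ}) := Nat.card_congr (uniEquiv k)
    rw [show k+1+3 = k+4 from rfl, this, Nat.card_prod, Nat.card_eq_fintype_card (α := Bool),
      Fintype.card_bool, ih]
    ring
def splitEquiv {α : Type*} (P Q : α → Prop) [DecidablePred Q] :
    {x // P x} ≃ {x // P x ∧ Q x} ⊕ {x // P x ∧ ¬ Q x} where
  toFun x := if h : Q x.1 then Sum.inl ⟨x.1, x.2, h⟩ else Sum.inr ⟨x.1, x.2, h⟩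
  invFun s := Sum.elim (fun x => ⟨x.1, x.2.1⟩) (fun x => ⟨x.1, x.2.1⟩) s
  left_inv x := by by_cases h : Q x.1 <;> simp [h]
  right_inv s := by
    rcases s with x | x
    · simp only [Sum.elim_inl]
      simp [x.2.2]
    · simp only [Sum.elim_inr]
      simp [x.2.2]

lemma avoids_of_lt_four {n : ℕ} (hn : n < 4) (σ : Perm (Fin n)) : AvoidsT1T2 σ := by
  have key : ∀ pat : Fin 4 → ℕ, ¬ Contains σ pat := by
    rintro pat ⟨f, hf, -⟩
    have : 4 ≤ n := by
      have := Fintype.card_le_of_injective f hf.injective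
      simpa using this
    omega
  exact ⟨key _, key _, key _, key _, key _, key _, key _, key _⟩

lemma step_card (m : ℕ) :
    Nat.card {σ : Perm (Fin (m+4)) // AvoidsT1T2 σ} =
      2 * Nat.card {τ : Perm (Fin (m+3)) // AvoidsT1T2 τ} + 2^(m+2) := by
  classical
  have e1 := splitEquiv (AvoidsT1T2 (n := m+4)) (fun σ => σ 0 = 0)
  have e2 := splitEquiv (fun σ : Perm (Fin (m+4)) => AvoidsT1T2 σ ∧ ¬ σ 0 = 0)
    (fun σ => σ 0 = 1)
  rw [Nat.card_congr e1, Nat.card_sum, Nat.card_congr e2, Nat.card_sum]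
  -- piece σ 0 = 0
  have c0 : Nat.card {σ : Perm (Fin (m+4)) // AvoidsT1T2 σ ∧ σ 0 = 0} =
      Nat.card {τ : Perm (Fin (m+3)) // AvoidsT1T2 τ} :=
    Nat.card_congr (pieceEquiv (0 : Fin (m+4)) (by simp))
  -- piece σ 0 = 1
  have c1 : Nat.card {σ : Perm (Fin (m+4)) // (AvoidsT1T2 σ ∧ ¬ σ 0 = 0) ∧ σ 0 = 1} =
      Nat.card {τ : Perm (Fin (m+3)) // AvoidsT1T2 τ} := by
    have e3 : {σ : Perm (Fin (m+4)) // (AvoidsT1T2 σ ∧ ¬ σ 0 = 0) ∧ σ 0 = 1} ≃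
        {σ : Perm (Fin (m+4)) // AvoidsT1T2 σ ∧ σ 0 = 1} := by
      apply Equiv.subtypeEquivRight
      intro σ
      constructor
      · rintro ⟨⟨h1, _⟩, h2⟩; exact ⟨h1, h2⟩
      · rintro ⟨h1, h2⟩
        refine ⟨⟨h1, ?_⟩, h2⟩
        rw [h2]
        intro hh
        rw [Fin.ext_iff] at hh
        simp at hh
    rw [Nat.card_congr e3]
    exact Nat.card_congr (pieceEquiv (1 : Fin (m+4)) (by simp))
  -- piece σ 0 ≥ 2 : exactly the Uni permutations
  have c2 : Nat.card {σ : Perm (Fin (m+4)) // (AvoidsT1T2 σ ∧ ¬ σ 0 = 0) ∧ ¬ σ 0 = 1} =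
      2^(m+2) := by
    have e4 : {σ : Perm (Fin (m+4)) // (AvoidsT1T2 σ ∧ ¬ σ 0 = 0) ∧ ¬ σ 0 = 1} ≃
        {σ : Perm (Fin (m+4)) // Uni σ} := by
      apply Equiv.subtypeEquivRight
      intro σ
      constructor
      · rintro ⟨⟨h1, h2⟩, h3⟩
        refine avoids_uni (m := m+1) h1 ?_
        rw [Fin.ext_iff] at h2 h3
        simp only [Fin.val_zero, Fin.val_one] at h2 h3
        omega
      · intro hu
        have h2 : 2 ≤ (σ 0 : ℕ) := uni_first (m := m+1) hu
        refine ⟨⟨uni_avoids hu, ?_⟩, ?_⟩ <;> intro hh <;> rw [Fin.ext_iff] at hh <;>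
          simp only [Fin.val_zero, Fin.val_one] at hh <;> omega
    rw [Nat.card_congr e4]
    exact uni_card (m+1)
  rw [c0, c1, c2]
  ring

theorem card_avoidsT1T2 (n : ℕ) (hn : 2 ≤ n) :
    Nat.card {σ : Equiv.Perm (Fin n) // AvoidsT1T2 σ} = n * 2 ^ (n - 2) := by
  have key : ∀ k : ℕ, Nat.card {σ : Perm (Fin (k+3)) // AvoidsT1T2 σ} = (k+3) * 2^(k+1) := by
    intro k
    induction k with
    | zero =>
      rw [Nat.card_congr (Equiv.subtypeUnivEquiv (avoids_of_lt_four (by omega))),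
        Nat.card_eq_fintype_card]
      simp [Fintype.card_perm, Nat.factorial]
    | succ j ih =>
      rw [show j+1+3 = j+4 from rfl, step_card j, ih]
      ring
  rcases Nat.lt_or_ge n 3 with h | h
  · have hn2 : n = 2 := by omega
    subst hn2
    rw [Nat.card_congr (Equiv.subtypeUnivEquiv (avoids_of_lt_four (by omega))),
      Nat.card_eq_fintype_card]
    simp [Fintype.card_perm]
  · obtain ⟨k, rfl⟩ : ∃ k, n = k + 3 := ⟨n - 3, by omega⟩
    rw [key k, show k+3-2 = k+1 from by omega]
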